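/- For every natural number n, the Stieltjes constant γₙ exists: the sequence m ↦ Σ_{k=1}^{m} (log k)ⁿ / k − (log m)^{n+1}/(n+1) converges to a real limit as m → ∞. -/

import Mathlib

open Filter Real

section aux
variable (n : ℕ)

private noncomputable def sf (x : ℝ) : ℝ := (Real.log x) ^ n / x

private lemma sf_contOn' {s : Set ℝ} (hs : ∀ x ∈ s, (1:ℝ) ≤ x) :
    ContinuousOn (sf n) s := by
  apply ContinuousOn.div
  · exact (Real.continuousOn_log.mono (fun x hx => by
      simp only [Set.mem_compl_iff, Set.mem_singleton_iff]
      have := hs x hx; linarith)).pow n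
  · exact continuousOn_id
  · intro x hx; have := hs x hx; linarith

private lemma sf_anti : AntitoneOn (sf n) (Set.Ici (Real.exp n)) := by
  have hexp : (1:ℝ) ≤ Real.exp n := Real.one_le_exp (by positivity)
  have hderiv : ∀ x ∈ interior (Set.Ici (Real.exp n)),
      HasDerivAt (sf n)
        ((((n : ℝ) * (Real.log x) ^ (n - 1) * x⁻¹) * x - (Real.log x) ^ n * 1) / x ^ 2) x := by
    intro x hx
    rw [interior_Ici] at hx
    have hxpos : (0:ℝ) < x := lt_of_lt_of_le (Real.exp_pos _) (le_of_lt hx)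
    exact ((Real.hasDerivAt_log hxpos.ne').pow n).div (hasDerivAt_id x) hxpos.ne'
  apply antitoneOn_of_deriv_nonpos (convex_Ici _)
  · exact sf_contOn' n (fun x hx => le_trans hexp hx)
  · intro x hx
    exact (hderiv x hx).differentiableAt.differentiableWithinAt
  · intro x hx
    rw [(hderiv x hx).deriv]
    rw [interior_Ici] at hx
    have hxpos : (0:ℝ) < x := lt_of_lt_of_le (Real.exp_pos _) (le_of_lt hx)
    have hlog : (n:ℝ) ≤ Real.log x := by
      rw [← Real.log_exp (n:ℝ)]
      exact Real.log_le_log (Real.exp_pos _) (le_of_lt hx)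
    have h0 : (0:ℝ) ≤ Real.log x := le_trans (Nat.cast_nonneg n) hlog
    apply div_nonpos_of_nonpos_of_nonneg _ (by positivity)
    rw [mul_assoc, inv_mul_cancel₀ hxpos.ne', mul_one, mul_one]
    cases n with
    | zero => simp
    | succ m =>
      have : (Real.log x) ^ (m + 1) = (Real.log x) ^ m * Real.log x := pow_succ _ _
      simp only [Nat.add_sub_cancel, this]
      push_cast at hlog ⊢
      nlinarith [mul_nonneg (pow_nonneg h0 m) (sub_nonneg.mpr hlog)]

private lemma sf_hasDeriv {x : ℝ} (hx : 0 < x) :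
    HasDerivAt (fun y => (Real.log y) ^ (n + 1) / (n + 1)) (sf n x) x := by
  have h := ((Real.hasDerivAt_log hx.ne').fun_pow (n + 1)).div_const ((n : ℝ) + 1)
  refine h.congr_deriv ?_
  have hne : ((n : ℝ) + 1) ≠ 0 := by positivity
  push_cast
  rw [sf]; field_simp

private lemma sf_integral {a b : ℝ} (ha : 1 ≤ a) (hb : 1 ≤ b) :
    ∫ x in a..b, sf n x =
      (Real.log b) ^ (n + 1) / (n + 1) - (Real.log a) ^ (n + 1) / (n + 1) := by
  apply intervalIntegral.integral_eq_sub_of_hasDerivAt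
  · intro x hx
    have h1 : (1:ℝ) ≤ x := le_trans (le_min ha hb) hx.1
    exact sf_hasDeriv n (by linarith)
  · exact (sf_contOn' n (fun x hx => le_trans (le_min ha hb) hx.1)).intervalIntegrable

private lemma sf_nonneg {x : ℝ} (hx : 1 ≤ x) : 0 ≤ sf n x :=
  div_nonneg (pow_nonneg (Real.log_nonneg hx) n) (by linarith)

private noncomputable def sg (m : ℕ) : ℝ :=
  (∑ k ∈ Finset.Icc 1 m, (Real.log k) ^ n / k) - (Real.log m) ^ (n + 1) / (n + 1)

private lemma sg_step {m : ℕ} (hm : 1 ≤ m) :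
    sg n (m + 1) = sg n m + sf n ((m:ℝ) + 1) - ∫ x in (m:ℝ)..((m:ℝ)+1), sf n x := by
  have h1 : (1:ℝ) ≤ (m:ℝ) := by exact_mod_cast hm
  rw [sf_integral n h1 (by linarith)]
  unfold sg
  rw [Finset.sum_Icc_succ_top (by omega : 1 ≤ m + 1)]
  simp only [sf]
  push_cast
  ring

private lemma sg_int_le {m : ℕ} (hm : Real.exp n ≤ m) (hm1 : 1 ≤ m) :
    (∫ x in (m:ℝ)..((m:ℝ)+1), sf n x) ≤ sf n m := by
  have h1 : (1:ℝ) ≤ (m:ℝ) := by exact_mod_cast hm1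
  have hle : (m:ℝ) ≤ (m:ℝ)+1 := by linarith
  have hint : IntervalIntegrable (sf n) MeasureTheory.volume (m:ℝ) ((m:ℝ)+1) :=
    (sf_contOn' n (fun x hx => by
      rw [Set.uIcc_of_le hle] at hx; linarith [hx.1])).intervalIntegrable
  calc (∫ x in (m:ℝ)..((m:ℝ)+1), sf n x)
      ≤ ∫ _ in (m:ℝ)..((m:ℝ)+1), sf n m := by
        apply intervalIntegral.integral_mono_on hle hint intervalIntegrable_const
        intro x hx
        exact sf_anti n hm (le_trans hm hx.1) hx.1
    _ = sf n m := by rw [intervalIntegral.integral_const]; simp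

private lemma sg_le_int {m : ℕ} (hm : Real.exp n ≤ m) (hm1 : 1 ≤ m) :
    sf n ((m:ℝ) + 1) ≤ ∫ x in (m:ℝ)..((m:ℝ)+1), sf n x := by
  have h1 : (1:ℝ) ≤ (m:ℝ) := by exact_mod_cast hm1
  have hle : (m:ℝ) ≤ (m:ℝ)+1 := by linarith
  have hint : IntervalIntegrable (sf n) MeasureTheory.volume (m:ℝ) ((m:ℝ)+1) :=
    (sf_contOn' n (fun x hx => by
      rw [Set.uIcc_of_le hle] at hx; linarith [hx.1])).intervalIntegrable
  calc sf n ((m:ℝ)+1)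
      = ∫ _ in (m:ℝ)..((m:ℝ)+1), sf n ((m:ℝ)+1) := by
        rw [intervalIntegral.integral_const]; simp
    _ ≤ ∫ x in (m:ℝ)..((m:ℝ)+1), sf n x := by
        apply intervalIntegral.integral_mono_on hle intervalIntegrable_const hint
        intro x hx
        exact sf_anti n (le_trans hm hx.1) (by linarith : Real.exp n ≤ (m:ℝ)+1) hx.2

end aux

/-- For every natural number n, the Stieltjes constant γₙ exists. -/
theorem stieltjes_constant_exists (n : ℕ) :
    ∃ γ : ℝ, Tendsto
      (fun m : ℕ => (∑ k ∈ Finset.Icc 1 m, (Real.log k) ^ n / k) -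
        (Real.log m) ^ (n + 1) / (n + 1)) atTop (nhds γ) := by
  set N := max 1 ⌈Real.exp n⌉₊ with hNdef
  have hN1 : 1 ≤ N := le_max_left _ _
  have hNexp : Real.exp n ≤ (N:ℝ) :=
    le_trans (Nat.le_ceil _) (by exact_mod_cast le_max_right 1 ⌈Real.exp n⌉₊)
  have hprop : ∀ m : ℕ, N ≤ m → Real.exp n ≤ (m:ℝ) ∧ 1 ≤ m := by
    intro m hm
    exact ⟨le_trans hNexp (by exact_mod_cast hm), le_trans hN1 hm⟩
  have hstep_le : ∀ m : ℕ, N ≤ m → sg n (m + 1) ≤ sg n m := by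
    intro m hm
    obtain ⟨he, h1⟩ := hprop m hm
    have h := sg_step n h1
    have h2 := sg_le_int n he h1
    linarith
  have hlb : ∀ m : ℕ, N ≤ m → sg n N + sf n m - sf n N ≤ sg n m := by
    intro m hm
    induction m, hm using Nat.le_induction with
    | base => linarith
    | succ m hm ih =>
      obtain ⟨he, h1⟩ := hprop m hm
      have h := sg_step n h1
      have h2 := sg_int_le n he h1
      have hc : ((m + 1 : ℕ) : ℝ) = (m:ℝ) + 1 := by push_cast; ring
      rw [hc]
      linarith
  have hanti : Antitone (fun j : ℕ => sg n (j + N)) := by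
    apply antitone_nat_of_succ_le
    intro j
    have : j + 1 + N = (j + N) + 1 := by omega
    rw [this]
    exact hstep_le (j + N) (Nat.le_add_left N j)
  have hbdd : BddBelow (Set.range fun j : ℕ => sg n (j + N)) := by
    refine ⟨sg n N - sf n N, ?_⟩
    rintro x ⟨j, rfl⟩
    have hm := Nat.le_add_left N j
    have h := hlb (j + N) hm
    push_cast at h
    have h0 : (0:ℝ) ≤ sf n (j + N) :=
      sf_nonneg n (by exact_mod_cast le_trans hN1 hm)
    simp only
    linarith
  exact ⟨_, (tendsto_add_atTop_iff_nat N).mp (tendsto_atTop_ciInf hanti hbdd)⟩
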